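/- For every integer n ≥ 1 and every n-chain x such that s(x) is an n-chain, the function s(s(x)) is an n-chain if and only if the components x_0, …, x_{n-1} are not all distinct (i.e., x is not injective). -/

import Mathlib

/-- The counting operator: `countOp n x j` is the number of indices `i` with `x i = j`. -/
def countOp (n : ℕ) (x : Fin n → ℕ) : Fin n → ℕ :=
  fun j => (Finset.univ.filter fun i => x i = (j : ℕ)).card

lemma sum_countOp (n : ℕ) (x : Fin n → ℕ) (hx : ∀ i, x i < n) :
    ∑ j : Fin n, countOp n x j = n := by
  classical
  have h := Finset.card_eq_sum_card_fiberwise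
    (f := fun i : Fin n => (⟨x i, hx i⟩ : Fin n)) (s := Finset.univ) (t := Finset.univ)
    (fun i _ => Finset.mem_univ _)
  simp only [Finset.card_univ, Fintype.card_fin] at h
  rw [show (∑ j : Fin n, countOp n x j) = ∑ j : Fin n,
      (Finset.univ.filter fun i : Fin n => (⟨x i, hx i⟩ : Fin n) = j).card from ?_, ← h]
  refine Finset.sum_congr rfl fun j _ => ?_
  unfold countOp
  congr 1
  ext i
  simp [Fin.ext_iff]

lemma countOp_eq_one_of_inj (n : ℕ) (x : Fin n → ℕ) (hx : ∀ i, x i < n)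
    (hinj : Function.Injective x) (j : Fin n) : countOp n x j = 1 := by
  classical
  have hfinj : Function.Injective (fun i : Fin n => (⟨x i, hx i⟩ : Fin n)) := by
    intro a b hab
    exact hinj (by simpa [Fin.ext_iff] using hab)
  have hsurj := Finite.surjective_of_injective hfinj
  obtain ⟨i0, hi0⟩ := hsurj j
  have : (Finset.univ.filter fun i : Fin n => x i = (j : ℕ)) = {i0} := by
    ext i
    simp only [Finset.mem_filter, Finset.mem_univ, true_and, Finset.mem_singleton]
    constructor
    · intro hxi
      exact hfinj (by simp [Fin.ext_iff, hxi, ← hi0])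
    · rintro rfl
      simpa [Fin.ext_iff] using congrArg Fin.val hi0
  simp [countOp, this]

theorem countOp_countOp_isChain_iff (n : ℕ) (hn : 1 ≤ n) (x : Fin n → ℕ)
    (hx : ∀ i, x i < n) (hsx : ∀ j, countOp n x j < n) :
    (∀ j, countOp n (countOp n x) j < n) ↔ ¬ Function.Injective x := by
  classical
  constructor
  · intro h hinj
    have hone := countOp_eq_one_of_inj n x hx hinj
    have h2 : 2 ≤ n := by
      by_contra h2
      have hn1 : n = 1 := by omega
      subst hn1
      have := hsx 0
      rw [hone 0] at this
      omega
    have hj : (1 : ℕ) < n := h2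
    have hlt := h ⟨1, hj⟩
    have heq : (Finset.univ.filter fun k : Fin n => countOp n x k = 1) = Finset.univ := by
      ext k; simp [hone k]
    have key : countOp n (countOp n x) ⟨1, hj⟩ = n := by
      show (Finset.univ.filter fun k : Fin n => countOp n x k = 1).card = n
      rw [heq]; simp
    omega
  · intro hinj j
    by_contra hlt
    push_neg at hlt
    have hcard : (Finset.univ.filter fun k : Fin n => countOp n x k = (j : ℕ)).card = n := by
      have hle : (Finset.univ.filter fun k : Fin n => countOp n x k = (j : ℕ)).card ≤ n := by
        calc _ ≤ (Finset.univ : Finset (Fin n)).card := Finset.card_filter_le _ _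
        _ = n := by simp
      have : n ≤ (Finset.univ.filter fun k : Fin n => countOp n x k = (j : ℕ)).card := hlt
      omega
    have huniv : (Finset.univ.filter fun k : Fin n => countOp n x k = (j : ℕ)) = Finset.univ :=
      Finset.eq_univ_of_card _ (by simp [hcard])
    have hconst : ∀ k : Fin n, countOp n x k = (j : ℕ) := by
      intro k
      have hk : k ∈ Finset.univ.filter fun k : Fin n => countOp n x k = (j : ℕ) := by
        rw [huniv]; exact Finset.mem_univ k
      exact (Finset.mem_filter.mp hk).2
    have hsum := sum_countOp n x hx
    rw [Finset.sum_congr rfl (fun k _ => hconst k)] at hsum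
    simp only [Finset.sum_const, Finset.card_univ, Fintype.card_fin, smul_eq_mul] at hsum
    have hj1 : (j : ℕ) = 1 := by
      rcases Nat.eq_zero_or_pos (j : ℕ) with h0 | h0
      · simp [h0] at hsum; omega
      · nlinarith
    apply hinj
    intro a b hab
    have ha : a ∈ Finset.univ.filter fun i : Fin n => x i = x a := by simp
    have hb : b ∈ Finset.univ.filter fun i : Fin n => x i = x a := by simp [hab]
    have hc : (Finset.univ.filter fun i : Fin n => x i = x a).card ≤ 1 := by
      have := hconst ⟨x a, hx a⟩
      simp only [countOp] at this
      omega
    exact Finset.card_le_one.mp hc a ha b hb
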